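/- Fix an integer k ≥ 1. Let (t_n)_{n≥1} be a sequence of and/or tree shapes whose saturation levels tend to infinity. Then the probability that the uniform random k-labelling of t_n computes a constant function tends to 1 as n → ∞; moreover P_k[t_n](True) = P_k[t_n](False) for every n, so both probabilities converge to 1/2. -/

import Mathlib

/-- A plane rooted tree (shape of an and/or tree). -/
inductive PTree where
  | leaf : PTree
  | node : List PTree → PTree

/-- An and/or tree shape: every internal node has at least two children. -/
inductive IsShape : PTree → Prop
  | leaf : IsShape .leaf
  | node (cs : List PTree) : 2 ≤ cs.length → (∀ c ∈ cs, IsShape c) → IsShape (.node cs)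

/-- The size of a shape: its number of leaves. -/
def PTree.size : PTree → ℕ
  | .leaf => 1
  | .node cs => (cs.attach.map (fun ⟨c, _⟩ => c.size)).sum
decreasing_by
  have := List.sizeOf_lt_of_mem ‹c ∈ cs›; simp only [PTree.node.sizeOf_spec]; omega

/-- The saturation level of a shape: the minimal depth of a leaf. -/
def PTree.satLevel : PTree → ℕ
  | .leaf => 0
  | .node cs => ((cs.attach.map (fun ⟨c, _⟩ => c.satLevel)).min?.getD 0) + 1
decreasing_by
  have := List.sizeOf_lt_of_mem ‹c ∈ cs›; simp only [PTree.node.sizeOf_spec]; omega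

/-- A `k`-labelled and/or tree: internal nodes carry a connective
(`true` = ∧, `false` = ∨), leaves carry a literal: a variable index in `Fin k`
together with a polarity (`true` = positive, `false` = negated). -/
inductive LTree (k : ℕ) where
  | leaf : Fin k → Bool → LTree k
  | node : Bool → List (LTree k) → LTree k

/-- Evaluation of a labelled and/or tree, with the convention that a childless
internal node labelled ∧ (resp. ∨) evaluates to `false` (resp. `true`). -/
def LTree.eval {k : ℕ} : LTree k → (Fin k → Bool) → Bool
  | .leaf i pos, x => if pos then x i else !(x i)
  | .node c cs, x =>
    if cs.isEmpty then !c
    else if c then (cs.attach.map (fun ⟨t, _⟩ => t.eval x)).all (fun b => b)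
    else (cs.attach.map (fun ⟨t, _⟩ => t.eval x)).any (fun b => b)
decreasing_by
  all_goals (have := List.sizeOf_lt_of_mem ‹t ∈ cs›; simp only [LTree.node.sizeOf_spec]; omega)

/-- A valid labelled and/or tree: every internal node has at least two children. -/
inductive IsLShape {k : ℕ} : LTree k → Prop
  | leaf (i : Fin k) (pos : Bool) : IsLShape (.leaf i pos)
  | node (c : Bool) (cs : List (LTree k)) : 2 ≤ cs.length →
      (∀ t ∈ cs, IsLShape t) → IsLShape (.node c cs)

/-- The size of a labelled tree: its number of leaves. -/
def LTree.size {k : ℕ} : LTree k → ℕ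
  | .leaf _ _ => 1
  | .node _ cs => (cs.attach.map (fun ⟨t, _⟩ => t.size)).sum
decreasing_by
  have := List.sizeOf_lt_of_mem ‹t ∈ cs›; simp only [LTree.node.sizeOf_spec]; omega

/-- The list of leaf labels of a labelled tree. -/
def LTree.leaves {k : ℕ} : LTree k → List (Fin k × Bool)
  | .leaf i pos => [(i, pos)]
  | .node _ cs => (cs.attach.map (fun ⟨t, _⟩ => t.leaves)).flatten
decreasing_by
  have := List.sizeOf_lt_of_mem ‹t ∈ cs›; simp only [LTree.node.sizeOf_spec]; omega

/-- The list of all `k`-labellings of a given shape (each one equally likely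
under the uniform random labelling). -/
def labellings (k : ℕ) : PTree → List (LTree k)
  | .leaf => (List.finRange k).flatMap (fun i => [LTree.leaf i true, LTree.leaf i false])
  | .node cs => [true, false].flatMap (fun c =>
      ((cs.attach.map (fun ⟨t, _⟩ => labellings k t)).sections).map (fun l => LTree.node c l))
decreasing_by
  have := List.sizeOf_lt_of_mem ‹t ∈ cs›; simp only [PTree.node.sizeOf_spec]; omega

open Classical in
/-- The probability that the uniform random `k`-labelling of the shape `t`
computes a Boolean function belonging to the set `s`. -/
noncomputable def Pr (k : ℕ) (t : PTree) (s : Set ((Fin k → Bool) → Bool)) : ℝ :=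
  (((labellings k t).filter (fun τ => decide (τ.eval ∈ s))).length : ℝ)
    / ((labellings k t).length : ℝ)

/-- `Pfun k t g` = `P_k[t](g)`: the probability that the uniform random
`k`-labelling of the shape `t` computes exactly the Boolean function `g`. -/
noncomputable def Pfun (k : ℕ) (t : PTree) (g : (Fin k → Bool) → Bool) : ℝ :=
  Pr k t {g}

/-- `x_i` is an essential variable of `f`. -/
def Essential {k : ℕ} (f : (Fin k → Bool) → Bool) (i : Fin k) : Prop :=
  ∃ x : Fin k → Bool, f (Function.update x i true) ≠ f (Function.update x i false)

open Classical in
/-- The number of essential variables of `f`. -/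
noncomputable def essCount {k : ℕ} (f : (Fin k → Bool) → Bool) : ℕ :=
  (Finset.univ.filter (fun i => Essential f i)).card

open Classical in
/-- The complexity `L(f)`: the minimal number of leaves of a valid `k`-labelled
and/or tree computing `f`, with the convention `L(True) = L(False) = 0`. -/
noncomputable def complexity (k : ℕ) (f : (Fin k → Bool) → Bool) : ℕ :=
  if f = (fun _ => true) ∨ f = (fun _ => false) then 0
  else sInf {n | ∃ τ : LTree k, IsLShape τ ∧ τ.eval = f ∧ τ.size = n}

/-! ### Auxiliary material for the proof -/

namespace AndOrAux

open List

/-! #### Generic list/bool counting lemmas -/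

theorem all_congr' {α : Type*} {l : List α} {p q : α → Bool}
    (h : ∀ a ∈ l, p a = q a) : l.all p = l.all q := by
  induction l with
  | nil => rfl
  | cons a l ih =>
    simp only [List.all_cons, h a (by simp), ih fun b hb => h b (by simp [hb])]

theorem not_any {α : Type*} (l : List α) (p : α → Bool) :
    (!l.any p) = l.all (fun a => !p a) := by
  induction l with
  | nil => rfl
  | cons a l ih => simp [List.any_cons, List.all_cons, ← ih]

theorem list_all_and {α : Type*} (l : List α) (p q : α → Bool) :
    (l.all fun a => p a && q a) = (l.all p && l.all q) := by
  induction l with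
  | nil => rfl
  | cons a l ih =>
    simp only [List.all_cons, ih]
    cases p a <;> cases q a <;> cases l.all p <;> cases l.all q <;> rfl

theorem length_eq_countP_add_countP_not {α : Type*} (l : List α) (p : α → Bool) :
    l.length = l.countP p + l.countP (fun a => !p a) := by
  induction l with
  | nil => rfl
  | cons a l ih =>
    simp only [List.countP_cons, List.length_cons, ih]
    cases p a <;> simp <;> omega

theorem countP_split {α : Type*} (l : List α) (p q : α → Bool) :
    l.countP p = l.countP (fun a => p a && q a) + l.countP (fun a => p a && !q a) := by
  induction l with
  | nil => rfl
  | cons a l ih =>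
    simp only [List.countP_cons, ih]
    cases hp : p a <;> cases hq : q a <;> simp <;> omega

theorem countP_disj {α : Type*} (l : List α) (p q : α → Bool)
    (h : ∀ a ∈ l, ¬(p a = true ∧ q a = true)) :
    l.countP (fun a => p a || q a) = l.countP p + l.countP q := by
  induction l with
  | nil => rfl
  | cons a l ih =>
    simp only [List.countP_cons, ih fun b hb => h b (by simp [hb])]
    have := h a (by simp)
    cases hp : p a <;> cases hq : q a <;> simp_all <;> omega

theorem sum_map_ite {α : Type*} (l : List α) (q : α → Bool) (c : ℕ) :
    (l.map (fun b => if q b then c else 0)).sum = c * l.countP q := by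
  induction l with
  | nil => simp
  | cons a l ih =>
    simp only [List.map_cons, List.sum_cons, ih, List.countP_cons]
    cases q a <;> simp <;> ring

theorem any_id_map {α : Type*} (l : List α) (f : α → Bool) :
    (l.map f).any (fun b => b) = l.any f := by
  induction l with
  | nil => rfl
  | cons a l ih => simp only [List.map_cons, List.any_cons, ih]

theorem all_id_map {α : Type*} (l : List α) (f : α → Bool) :
    (l.map f).all (fun b => b) = l.all f := by
  induction l with
  | nil => rfl
  | cons a l ih => simp only [List.map_cons, List.all_cons, ih]

theorem flatMap_perm {α β : Type*} (l : List α) (f g : α → List β)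
    (h : ∀ a ∈ l, (f a).Perm (g a)) : (l.flatMap f).Perm (l.flatMap g) := by
  induction l with
  | nil => simp
  | cons a l ih =>
    simp only [List.flatMap_cons]
    exact (h a (by simp)).append (ih fun b hb => h b (by simp [hb]))

theorem sections_map {α β : Type*} (f : α → β) :
    ∀ (L : List (List α)), (L.map (List.map f)).sections = L.sections.map (List.map f)
  | [] => by simp [List.sections]
  | l :: L => by
    show ((l.map f) :: (L.map (List.map f))).sections = _
    show ((L.map (List.map f)).sections).flatMap (fun s => (l.map f).map (· :: s)) = _
    rw [sections_map f L]
    show _ = (L.sections.flatMap (fun s => l.map (· :: s))).map (List.map f)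
    rw [List.map_flatMap, List.flatMap_map]
    congr 1
    funext s
    simp [Function.comp, List.map_map]

theorem sections_perm {α : Type*} :
    ∀ {L L' : List (List α)}, List.Forall₂ List.Perm L L' → L.sections.Perm L'.sections := by
  intro L L' h
  induction h with
  | nil => exact List.Perm.refl _
  | @cons l l' L L' hll hLL ih =>
    show (L.sections.flatMap (fun s => l.map (· :: s))).Perm
      (L'.sections.flatMap (fun s => l'.map (· :: s)))
    refine (List.Perm.flatMap_right _ ih).trans ?_
    exact flatMap_perm _ _ _ fun s _ => hll.map _

theorem countP_sections {α : Type*} (p : α → Bool) :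
    ∀ (L : List (List α)),
      L.sections.countP (fun s => s.all p) = (L.map (fun l => l.countP p)).prod
  | [] => by simp [List.sections]
  | l :: L => by
    show (L.sections.flatMap (fun s => l.map (· :: s))).countP (fun s => s.all p) = _
    rw [List.countP_flatMap]
    have : ∀ s : List α,
        ((List.countP (fun s => s.all p)) ∘ (fun s => l.map (· :: s))) s
          = if s.all p then l.countP p else 0 := by
      intro s
      simp only [Function.comp, List.countP_map]
      cases hs : s.all p
      · simp only [Bool.false_eq_true, if_false]
        rw [show (List.countP ((fun s => s.all p) ∘ (· :: s)) l) =
            List.countP (fun _ => false) l from List.countP_congr (by simp [hs]), List.countP_false]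
        rfl
      · simp only [if_true]
        exact List.countP_congr (by simp [hs])
    rw [List.map_congr_left fun s _ => this s, sum_map_ite, countP_sections p L]
    simp [Nat.mul_comm]

theorem length_sections {α : Type*} (L : List (List α)) :
    L.sections.length = (L.map List.length).prod := by
  have h1 := countP_sections (fun _ : α => true) L
  have h2 : L.sections.countP (fun s => s.all fun _ => true) = L.sections.length := by
    rw [show (fun s : List α => s.all fun _ => true) = (fun _ => true) from funext (by simp)]
    exact congrFun List.countP_true _
  have h3 : (L.map (fun l => l.countP fun _ => true)).prod = (L.map List.length).prod := by
    congr 1; exact List.map_congr_left fun l _ => congrFun List.countP_true l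
  rw [← h2, h1, h3]

theorem length_mem_sections {α : Type*} {L : List (List α)} {s : List α}
    (h : s ∈ L.sections) : s.length = L.length :=
  (List.mem_sections.mp h).length_eq

theorem countP_le_sum {α ι : Type*} (s : Finset ι) (l : List α) (p : α → Bool)
    (q : ι → α → Bool) (h : ∀ a ∈ l, p a = true → ∃ i ∈ s, q i a = true) :
    l.countP p ≤ ∑ i ∈ s, l.countP (q i) := by
  induction l with
  | nil => simp
  | cons a l ih =>
    simp only [List.countP_cons]
    rw [Finset.sum_add_distrib]
    have h1 : l.countP p ≤ ∑ i ∈ s, l.countP (q i) := ih fun b hb => h b (by simp [hb])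
    have h2 : (if p a = true then 1 else 0) ≤ ∑ i ∈ s, (if q i a = true then 1 else 0) := by
      by_cases hp : p a = true
      · obtain ⟨i, hi, hqi⟩ := h a (by simp) hp
        calc (if p a = true then 1 else 0) = 1 := by simp [hp]
        _ = (if q i a = true then 1 else 0) := by simp [hqi]
        _ ≤ ∑ i ∈ s, (if q i a = true then 1 else 0) :=
            Finset.single_le_sum (f := fun i => if q i a = true then (1:ℕ) else 0)
              (fun j _ => by positivity) hi
      · simp [hp]
    omega

theorem min?_getD_le {l : List ℕ} {a : ℕ} (h : a ∈ l) : l.min?.getD 0 ≤ a := by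
  cases hm : l.min? with
  | none => rw [List.min?_eq_none_iff] at hm; simp [hm] at h
  | some m => simpa using (List.min?_eq_some_iff' .. |>.mp hm).2 a h

theorem prod_map_nonneg {α : Type*} (l : List α) (f : α → ℝ)
    (h : ∀ a ∈ l, 0 ≤ f a) : 0 ≤ (l.map f).prod := by
  induction l with
  | nil => simp
  | cons a l ih =>
    simp only [List.map_cons, List.prod_cons]
    exact mul_nonneg (h a (by simp)) (ih fun b hb => h b (by simp [hb]))

theorem prod_map_le_prod_map {α : Type*} (l : List α) (f g : α → ℝ)
    (h : ∀ a ∈ l, 0 ≤ f a ∧ f a ≤ g a) : (l.map f).prod ≤ (l.map g).prod := by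
  induction l with
  | nil => simp
  | cons a l ih =>
    simp only [List.map_cons, List.prod_cons]
    have hf := h a (by simp)
    exact mul_le_mul hf.2 (ih fun b hb => h b (by simp [hb]))
      (prod_map_nonneg _ _ fun b hb => (h b (by simp [hb])).1) (hf.1.trans hf.2)

theorem prod_map_mul_const {α : Type*} (l : List α) (f : α → ℝ) (c : ℝ) :
    (l.map (fun a => c * f a)).prod = c ^ l.length * (l.map f).prod := by
  induction l with
  | nil => simp
  | cons a l ih =>
    simp only [List.map_cons, List.prod_cons, ih, List.length_cons]
    ring

/-! #### The negation involution on labelled trees -/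

variable {k : ℕ}

/-- Flip every connective and every polarity. -/
def negT : LTree k → LTree k
  | .leaf i pos => .leaf i (!pos)
  | .node c cs => .node (!c) (cs.attach.map (fun ⟨t, _⟩ => negT t))
decreasing_by
  have := List.sizeOf_lt_of_mem ‹t ∈ cs›; simp only [LTree.node.sizeOf_spec]; omega

theorem negT_node (c : Bool) (cs : List (LTree k)) :
    negT (.node c cs) = .node (!c) (cs.map negT) := by
  rw [negT]; congr 1; simp

theorem negT_leaf (i : Fin k) (pos : Bool) : negT (.leaf i pos) = .leaf i (!pos) := by
  rw [negT]

theorem eval_node (c : Bool) (cs : List (LTree k)) (x : Fin k → Bool) :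
    (LTree.node c cs).eval x =
      if cs.isEmpty then !c
      else if c then cs.all (fun t => t.eval x) else cs.any (fun t => t.eval x) := by
  rw [LTree.eval]
  by_cases h : cs.isEmpty
  · simp [h]
  · simp only [h, if_false]
    have hmap : cs.attach.map (fun t => t.1.eval x) = cs.map (fun t => t.eval x) := by simp
    cases c <;> simp only [hmap, if_true, if_false, Bool.false_eq_true] <;>
      [exact AndOrAux.any_id_map _ _; exact AndOrAux.all_id_map _ _]

theorem eval_negT : ∀ (τ : LTree k) (x : Fin k → Bool), (negT τ).eval x = !(τ.eval x)
  | .leaf i pos, x => by cases pos <;> simp [negT_leaf, LTree.eval]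
  | .node c cs, x => by
    rw [negT_node, eval_node, eval_node]
    by_cases h : cs.isEmpty
    · obtain rfl : cs = [] := List.isEmpty_iff.mp h
      simp
    · have h' : (cs.map negT).isEmpty = false := by
        simp only [List.isEmpty_eq_false_iff] at h ⊢; simpa using h
      simp only [h', List.isEmpty_eq_false_iff.mpr, h, Bool.not_true, if_false]
      simp only [Bool.not_eq_true, List.isEmpty_eq_false_iff] at h
      rw [List.all_map, List.any_map]
      have hall : (cs.all fun t => (negT t).eval x) = cs.all (fun t => !(t.eval x)) :=
        AndOrAux.all_congr' fun t _ => eval_negT t x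
      have hany : (cs.any fun t => (negT t).eval x) = cs.any (fun t => !(t.eval x)) := by
        rw [← Bool.not_not (cs.any fun t => (negT t).eval x),
          AndOrAux.not_any, ← Bool.not_not (cs.any fun t => !(t.eval x)), AndOrAux.not_any]
        congr 1
        exact AndOrAux.all_congr' fun t ht => by rw [eval_negT t x]
      cases c
      · simp only [Bool.not_false, if_true, if_false, Function.comp]
        rw [show ((fun t => LTree.eval t x) ∘ negT) = fun t => (negT t).eval x from rfl, hall,
          ← AndOrAux.not_any]
        simp
      · simp only [Bool.not_true, if_false, if_true, Function.comp]
        rw [show ((fun t => LTree.eval t x) ∘ negT) = fun t => (negT t).eval x from rfl, hany,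
          ← Bool.not_not (cs.any fun t => !(t.eval x)), AndOrAux.not_any]
        simp [AndOrAux.all_congr' (l := cs) (fun t _ => Bool.not_not (t.eval x))]
decreasing_by
  all_goals (have := List.sizeOf_lt_of_mem ‹t ∈ cs›; simp only [LTree.node.sizeOf_spec]; omega)

/-! #### Unfolding `labellings` -/

theorem labellings_leaf :
    labellings k .leaf
      = (List.finRange k).flatMap (fun i => [LTree.leaf i true, LTree.leaf i false]) := by
  rw [labellings]

theorem labellings_node (cs : List PTree) :
    labellings k (.node cs) =
      ((cs.map (labellings k)).sections.map (fun l => LTree.node true l))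
      ++ ((cs.map (labellings k)).sections.map (fun l => LTree.node false l)) := by
  rw [labellings]
  have : cs.attach.map (fun t => labellings k t.1) = cs.map (labellings k) := by simp
  simp [this]

theorem labellings_length_pos (hk : 1 ≤ k) : ∀ (t : PTree), 0 < (labellings k t).length
  | .leaf => by
    rw [labellings_leaf, List.length_flatMap]
    have : 0 < (List.finRange k).length := by simpa using (show 0 < k from hk)
    rcases List.exists_mem_of_length_pos this with ⟨i, hi⟩
    calc 0 < 2 := by norm_num
    _ = ((fun i => [LTree.leaf i true, LTree.leaf i false]) i).length := by simp
    _ ≤ _ := by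
        exact List.single_le_sum (by simp) _ (List.mem_map_of_mem hi)
  | .node cs => by
    rw [labellings_node]
    simp only [List.length_append, List.length_map, AndOrAux.length_sections]
    rw [List.map_map]
    have : 0 < (cs.map (List.length ∘ labellings k)).prod := by
      apply List.prod_pos
      intro n hn
      rcases List.mem_map.mp hn with ⟨c, hc, rfl⟩
      exact labellings_length_pos hk c
    omega
decreasing_by
  have := List.sizeOf_lt_of_mem ‹c ∈ cs›; simp only [PTree.node.sizeOf_spec]; omega

/-! #### `negT` permutes the labellings -/

theorem perm_negT : ∀ (t : PTree), ((labellings k t).map negT).Perm (labellings k t)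
  | .leaf => by
    rw [labellings_leaf, List.map_flatMap]
    apply AndOrAux.flatMap_perm
    intro i _
    simp only [List.map_cons, List.map_nil, negT_leaf, Bool.not_true, Bool.not_false]
    exact List.Perm.swap _ _ _
  | .node cs => by
    rw [labellings_node]
    set S := (cs.map (labellings k)).sections with hS
    have hSperm : (S.map (List.map negT)).Perm S := by
      rw [hS, ← AndOrAux.sections_map]
      apply AndOrAux.sections_perm
      rw [List.map_map, List.forall₂_map_left_iff, List.forall₂_map_right_iff]
      apply List.forall₂_same.mpr
      intro c hc
      exact perm_negT c
    have key : ∀ c : Bool, ((S.map (fun l => LTree.node c l)).map negT).Perm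
        (S.map (fun l => LTree.node (!c) l)) := by
      intro c
      have h1 : (S.map (fun l => LTree.node c l)).map negT
          = (S.map (List.map negT)).map (fun l => LTree.node (!c) l) := by
        rw [List.map_map, List.map_map]
        exact List.map_congr_left fun l _ => by simp [Function.comp, negT_node]
      rw [h1]
      exact hSperm.map _
    rw [List.map_append]
    exact ((key true).append (key false)).trans List.perm_append_comm
decreasing_by
  have := List.sizeOf_lt_of_mem ‹c ∈ cs›; simp only [PTree.node.sizeOf_spec]; omega

theorem countP_negT (t : PTree) (p : LTree k → Bool) :
    (labellings k t).countP p = (labellings k t).countP (fun τ => p (negT τ)) := by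
  have := (perm_negT (k := k) t).countP_eq p
  rw [← this, List.countP_map]
  rfl

/-! #### The key counting identity on sections -/

theorem diff_count {α : Type*} (M : List (List α)) (u v : α → Bool) :
    M.sections.countP (fun s => s.all u != s.all v)
      + 2 * (M.map (fun l => l.countP (fun a => u a && v a))).prod
    = (M.map (fun l => l.countP u)).prod + (M.map (fun l => l.countP v)).prod := by
  set S := M.sections with hS
  have h1 : S.countP (fun s => s.all u)
      = S.countP (fun s => s.all u && s.all v) + S.countP (fun s => s.all u && !(s.all v)) :=
    AndOrAux.countP_split ..
  have h2 : S.countP (fun s => s.all v)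
      = S.countP (fun s => s.all u && s.all v) + S.countP (fun s => !(s.all u) && s.all v) := by
    rw [AndOrAux.countP_split S (fun s => s.all v) (fun s => s.all u)]
    congr 1
    · exact List.countP_congr (fun s _ => by cases s.all u <;> cases s.all v <;> simp)
    · exact List.countP_congr (fun s _ => by cases s.all u <;> cases s.all v <;> simp)
  have h3 : S.countP (fun s => s.all u != s.all v)
      = S.countP (fun s => s.all u && !(s.all v)) + S.countP (fun s => !(s.all u) && s.all v) := by
    rw [show (fun s : List α => s.all u != s.all v)
        = (fun s => (s.all u && !(s.all v)) || (!(s.all u) && s.all v)) from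
      funext fun s => by cases s.all u <;> cases s.all v <;> rfl]
    exact AndOrAux.countP_disj _ _ _ (fun s _ => by cases s.all u <;> cases s.all v <;> simp)
  have h4 : S.countP (fun s => s.all u && s.all v)
      = (M.map (fun l => l.countP fun a => u a && v a)).prod := by
    rw [show (fun s : List α => s.all u && s.all v) = (fun s => s.all fun a => u a && v a) from
      funext fun s => (AndOrAux.list_all_and s u v).symm]
    exact AndOrAux.countP_sections _ M
  have h5 := AndOrAux.countP_sections u M
  have h6 := AndOrAux.countP_sections v M
  rw [← hS] at h5 h6
  omega

theorem countP_labellings_node (cs : List PTree) (p : LTree k → Bool) :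
    (labellings k (.node cs)).countP p
      = (cs.map (labellings k)).sections.countP (fun l => p (.node true l))
        + (cs.map (labellings k)).sections.countP (fun l => p (.node false l)) := by
  rw [labellings_node, List.countP_append, List.countP_map, List.countP_map]; rfl

theorem length_labellings_node (cs : List PTree) :
    (labellings k (.node cs)).length
      = 2 * (cs.map (fun c => (labellings k c).length)).prod := by
  rw [labellings_node]
  simp only [List.length_append, List.length_map, AndOrAux.length_sections, List.map_map]
  rw [show (List.length ∘ labellings k) = fun c => (labellings k c).length from rfl]
  omega

theorem Dnode (cs : List PTree) (hcs : cs ≠ []) (x y : Fin k → Bool) :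
    (labellings k (.node cs)).countP (fun τ => τ.eval x != τ.eval y)
      + 2 * (cs.map (fun c => (labellings k c).countP (fun τ => τ.eval x && τ.eval y))).prod
      + 2 * (cs.map (fun c => (labellings k c).countP (fun τ => !τ.eval x && !τ.eval y))).prod
    = (cs.map (fun c => (labellings k c).countP (fun τ => τ.eval x))).prod
      + (cs.map (fun c => (labellings k c).countP (fun τ => τ.eval y))).prod
      + (cs.map (fun c => (labellings k c).countP (fun τ => !τ.eval x))).prod
      + (cs.map (fun c => (labellings k c).countP (fun τ => !τ.eval y))).prod := by
  set M := cs.map (labellings k) with hM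
  have hne : ∀ s ∈ M.sections, s.isEmpty = false := by
    intro s hs
    have h := AndOrAux.length_mem_sections hs
    rw [List.isEmpty_eq_false_iff]
    intro h0
    rw [h0] at h
    simp only [List.length_nil, hM, List.length_map] at h
    exact hcs (List.length_eq_zero_iff.mp h.symm)
  rw [countP_labellings_node]
  have heval : ∀ (c : Bool) (s : List (LTree k)), s.isEmpty = false → ∀ z : Fin k → Bool,
      (LTree.node c s).eval z
        = if c then s.all (fun τ => τ.eval z) else s.any (fun τ => τ.eval z) := by
    intro c s h z
    rw [eval_node, h]
    simp
  have ht : M.sections.countP (fun l => (LTree.node true l).eval x != (LTree.node true l).eval y)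
      = M.sections.countP
          (fun l => (l.all fun τ => τ.eval x) != (l.all fun τ => τ.eval y)) := by
    apply List.countP_congr
    intro s hs
    rw [heval true s (hne s hs) x, heval true s (hne s hs) y]
    simp
  have hf : M.sections.countP (fun l => (LTree.node false l).eval x != (LTree.node false l).eval y)
      = M.sections.countP
          (fun l => (l.all fun τ => !τ.eval x) != (l.all fun τ => !τ.eval y)) := by
    apply List.countP_congr
    intro s hs
    rw [heval false s (hne s hs) x, heval false s (hne s hs) y]
    simp only [if_false, Bool.false_eq_true]
    have e1 : s.any (fun τ => τ.eval x) = !(s.all fun τ => !τ.eval x) := by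
      rw [← AndOrAux.not_any, Bool.not_not]
    have e2 : s.any (fun τ => τ.eval y) = !(s.all fun τ => !τ.eval y) := by
      rw [← AndOrAux.not_any, Bool.not_not]
    rw [e1, e2]
    cases s.all fun τ => !τ.eval x <;> cases s.all fun τ => !τ.eval y <;> simp
  rw [ht, hf]
  have d1 := diff_count M (fun τ => τ.eval x) (fun τ => τ.eval y)
  have d2 := diff_count M (fun τ => !τ.eval x) (fun τ => !τ.eval y)
  simp only [hM, List.map_map, Function.comp_def] at d1 d2 ⊢
  omega

/-! #### Per-shape symmetry consequences -/

theorem countP_not_eval (t : PTree) (x : Fin k → Bool) :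
    (labellings k t).countP (fun τ => !(τ.eval x)) = (labellings k t).countP (fun τ => τ.eval x) := by
  rw [countP_negT t (fun τ => !(τ.eval x))]
  exact List.countP_congr fun τ _ => by rw [eval_negT]; simp

theorem half_count (t : PTree) (x : Fin k → Bool) :
    2 * (labellings k t).countP (fun τ => τ.eval x) = (labellings k t).length := by
  have h1 := List.length_eq_countP_add_countP (fun τ : LTree k => τ.eval x) (l := labellings k t)
  have h2 : (labellings k t).countP (fun τ => decide ¬τ.eval x = true)
      = (labellings k t).countP (fun τ => !(τ.eval x)) :=
    List.countP_congr fun τ _ => by cases τ.eval x <;> simp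
  have h3 := countP_not_eval t x
  omega

theorem countP_nFF_eq_nTT (t : PTree) (x y : Fin k → Bool) :
    (labellings k t).countP (fun τ => !τ.eval x && !τ.eval y)
      = (labellings k t).countP (fun τ => τ.eval x && τ.eval y) := by
  rw [countP_negT t (fun τ => τ.eval x && τ.eval y)]
  exact List.countP_congr fun τ _ => by rw [eval_negT, eval_negT]

theorem two_nTT_add_D (t : PTree) (x y : Fin k → Bool) :
    2 * (labellings k t).countP (fun τ => τ.eval x && τ.eval y)
      + (labellings k t).countP (fun τ => τ.eval x != τ.eval y)
    = (labellings k t).length := by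
  set l := labellings k t with hl
  have h1 := List.length_eq_countP_add_countP (fun τ : LTree k => τ.eval x) (l := l)
  have h2 : l.countP (fun τ => decide ¬τ.eval x = true) = l.countP (fun τ => !(τ.eval x)) :=
    List.countP_congr fun τ _ => by cases τ.eval x <;> simp
  have h3 := AndOrAux.countP_split l (fun τ => τ.eval x) (fun τ => τ.eval y)
  have h4 := AndOrAux.countP_split l (fun τ => !τ.eval x) (fun τ => τ.eval y)
  have h5 : l.countP (fun τ => !τ.eval x && !τ.eval y)
      = l.countP (fun τ => τ.eval x && τ.eval y) := countP_nFF_eq_nTT t x y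
  have h6 : l.countP (fun τ => τ.eval x != τ.eval y)
      = l.countP (fun τ => τ.eval x && !(τ.eval y))
        + l.countP (fun τ => !(τ.eval x) && τ.eval y) := by
    rw [show (fun τ : LTree k => τ.eval x != τ.eval y)
        = (fun τ => (τ.eval x && !(τ.eval y)) || (!(τ.eval x) && τ.eval y)) from
      funext fun τ => by cases τ.eval x <;> cases τ.eval y <;> rfl]
    exact AndOrAux.countP_disj _ _ _ (fun τ _ => by cases τ.eval x <;> cases τ.eval y <;> simp)
  omega

/-! #### The contraction sequence -/

/-- `dseq n` bounds the probability that two fixed assignments give different values,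
for shapes of saturation level at least `n`. -/
noncomputable def dseq : ℕ → ℝ
  | 0 => 1
  | n + 1 => dseq n - (dseq n) ^ 2 / 2

theorem dseq_bounds : ∀ n, 0 ≤ dseq n ∧ dseq n ≤ 1
  | 0 => by norm_num [dseq]
  | n + 1 => by
    have ih := dseq_bounds n
    constructor
    · show 0 ≤ dseq n - (dseq n) ^ 2 / 2
      nlinarith [ih.1, ih.2]
    · show dseq n - (dseq n) ^ 2 / 2 ≤ 1
      nlinarith [ih.1, ih.2, sq_nonneg (dseq n)]

theorem dseq_antitone : Antitone dseq :=
  antitone_nat_of_succ_le fun n => by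
    show dseq n - (dseq n) ^ 2 / 2 ≤ dseq n
    nlinarith [sq_nonneg (dseq n)]

theorem dseq_tendsto : Filter.Tendsto dseq Filter.atTop (nhds 0) := by
  have hbdd : BddBelow (Set.range dseq) := ⟨0, by rintro r ⟨n, rfl⟩; exact (dseq_bounds n).1⟩
  have hlim := tendsto_atTop_ciInf dseq_antitone hbdd
  set L := ⨅ n, dseq n with hL
  have h2 : Filter.Tendsto (fun n => dseq (n + 1)) Filter.atTop (nhds L) :=
    (Filter.tendsto_add_atTop_iff_nat 1).mpr hlim
  have h3 : Filter.Tendsto (fun n => dseq n - (dseq n) ^ 2 / 2) Filter.atTop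
      (nhds (L - L ^ 2 / 2)) := hlim.sub ((hlim.pow 2).div_const 2)
  have heq : (fun n => dseq (n + 1)) = fun n => dseq n - (dseq n) ^ 2 / 2 := funext fun n => rfl
  have hLL : L = L - L ^ 2 / 2 := tendsto_nhds_unique h2 (heq ▸ h3)
  have : L = 0 := by nlinarith [hLL]
  exact this ▸ hlim

theorem pow_bound : ∀ m : ℕ, 2 ≤ m → ∀ q : ℝ, 0 ≤ q → q ≤ 1 →
    2 * (1 - q ^ m) ≤ 2 ^ m * ((1 - q) - (1 - q) ^ 2 / 2) := by
  intro m hm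
  induction m with
  | zero => omega
  | succ m ih =>
    intro q h0 h1
    rcases Nat.lt_or_ge m 2 with hm2 | hm2
    · have : m = 1 := by omega
      subst this
      nlinarith [sq_nonneg q, sq_nonneg (1 - q)]
    · have hih := ih (by omega) q h0 h1
      have hq : q ^ m * (2 - q) ≤ 1 := by
        have h3 : q ^ m ≤ q := by
          calc q ^ m ≤ q ^ 1 := pow_le_pow_of_le_one h0 h1 (by omega)
          _ = q := pow_one q
        nlinarith [sq_nonneg (1 - q)]
      have h2m : (0:ℝ) ≤ 2 ^ m := by positivity
      have hstep : 2 * (1 - q ^ (m + 1)) ≤ 2 * (2 * (1 - q ^ m)) := by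
        have : q ^ (m + 1) = q ^ m * q := pow_succ q m
        nlinarith [hq]
      calc 2 * (1 - q ^ (m + 1)) ≤ 2 * (2 * (1 - q ^ m)) := hstep
      _ ≤ 2 * (2 ^ m * ((1 - q) - (1 - q) ^ 2 / 2)) := by linarith
      _ = 2 ^ (m + 1) * ((1 - q) - (1 - q) ^ 2 / 2) := by ring

/-! #### The main recursive bound -/

theorem satLevel_node (cs : List PTree) :
    (PTree.node cs).satLevel = (cs.map PTree.satLevel).min?.getD 0 + 1 := by
  rw [PTree.satLevel]
  congr 2
  simp

theorem D_le_main (hk : 1 ≤ k) (x y : Fin k → Bool) :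
    ∀ (t : PTree), IsShape t →
      ((labellings k t).countP (fun τ => τ.eval x != τ.eval y) : ℝ)
        ≤ dseq t.satLevel * (labellings k t).length
  | .leaf, _ => by
    rw [show PTree.leaf.satLevel = 0 by rw [PTree.satLevel], show dseq 0 = 1 from rfl, one_mul]
    exact_mod_cast List.countP_le_length
  | .node cs, hsh => by
    obtain ⟨hlen, hch⟩ : 2 ≤ cs.length ∧ ∀ c ∈ cs, IsShape c := by
      cases hsh with | node _ h1 h2 => exact ⟨h1, h2⟩
    have hcs : cs ≠ [] := by
      intro h; rw [h] at hlen; simp at hlen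
    set s := (cs.map PTree.satLevel).min?.getD 0 with hs
    set e := dseq s with he
    have he0 : 0 ≤ e := (dseq_bounds s).1
    have he1 : e ≤ 1 := (dseq_bounds s).2
    -- child bounds
    have child : ∀ c ∈ cs, ((labellings k c).countP (fun τ => τ.eval x != τ.eval y) : ℝ)
        ≤ e * (labellings k c).length := by
      intro c hc
      have h1 := D_le_main hk x y c (hch c hc)
      have h2 : s ≤ c.satLevel := AndOrAux.min?_getD_le (List.mem_map_of_mem hc)
      have h3 : dseq c.satLevel ≤ e := dseq_antitone h2
      calc ((labellings k c).countP (fun τ => τ.eval x != τ.eval y) : ℝ)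
          ≤ dseq c.satLevel * (labellings k c).length := h1
        _ ≤ e * (labellings k c).length :=
            mul_le_mul_of_nonneg_right h3 (by positivity)
    have hWpos : ∀ c ∈ cs, (0:ℝ) < (labellings k c).length := by
      intro c _; exact_mod_cast labellings_length_pos hk c
    -- cast counting identity to ℝ
    have Enat := Dnode cs hcs x y
    have hcast : ∀ (f : LTree k → Bool),
        ((cs.map (fun c => (labellings k c).countP f)).prod : ℝ)
          = (cs.map (fun c => ((labellings k c).countP f : ℝ))).prod := by
      intro f
      rw [Nat.cast_list_prod, List.map_map]
      rfl
    have E : ((labellings k (.node cs)).countP (fun τ => τ.eval x != τ.eval y) : ℝ)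
        + 2 * (cs.map (fun c => ((labellings k c).countP (fun τ => τ.eval x && τ.eval y) : ℝ))).prod
        + 2 * (cs.map (fun c => ((labellings k c).countP (fun τ => !τ.eval x && !τ.eval y) : ℝ))).prod
      = (cs.map (fun c => ((labellings k c).countP (fun τ => τ.eval x) : ℝ))).prod
        + (cs.map (fun c => ((labellings k c).countP (fun τ => τ.eval y) : ℝ))).prod
        + (cs.map (fun c => ((labellings k c).countP (fun τ => !τ.eval x) : ℝ))).prod
        + (cs.map (fun c => ((labellings k c).countP (fun τ => !τ.eval y) : ℝ))).prod := by
      have := congrArg (Nat.cast : ℕ → ℝ) Enat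
      push_cast at this
      simp only [List.map_map, Function.comp_def] at this
      exact this
    -- identify each product
    set P := (cs.map (fun c => ((labellings k c).length : ℝ))).prod with hP
    have hPnonneg : 0 ≤ P := AndOrAux.prod_map_nonneg _ _ fun c hc => (hWpos c hc).le
    have hhalf : ∀ z : Fin k → Bool,
        (cs.map (fun c => ((labellings k c).countP (fun τ => τ.eval z) : ℝ))).prod
          = (1/2 : ℝ) ^ cs.length * P := by
      intro z
      rw [← AndOrAux.prod_map_mul_const]
      congr 1
      refine List.map_congr_left fun c _ => ?_
      have := half_count (k := k) c z
      have : (2:ℝ) * ((labellings k c).countP (fun τ => τ.eval z) : ℝ)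
          = ((labellings k c).length : ℝ) := by exact_mod_cast congrArg (Nat.cast : ℕ → ℝ) this
      linarith
    have hhalfneg : ∀ z : Fin k → Bool,
        (cs.map (fun c => ((labellings k c).countP (fun τ => !τ.eval z) : ℝ))).prod
          = (1/2 : ℝ) ^ cs.length * P := by
      intro z
      rw [show (cs.map fun c => ((labellings k c).countP (fun τ => !τ.eval z) : ℝ))
          = cs.map fun c => ((labellings k c).countP (fun τ => τ.eval z) : ℝ) from
        List.map_congr_left fun c _ => by rw [countP_not_eval]]
      exact hhalf z
    have hTT : (cs.map (fun c => ((labellings k c).countP (fun τ => !τ.eval x && !τ.eval y) : ℝ))).prod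
        = (cs.map (fun c => ((labellings k c).countP (fun τ => τ.eval x && τ.eval y) : ℝ))).prod := by
      congr 1
      exact List.map_congr_left fun c _ => by rw [countP_nFF_eq_nTT]
    -- lower bound on the TT product
    have hTTlow : (1/2 : ℝ) ^ cs.length * ((1 - e) ^ cs.length * P)
        ≤ (cs.map (fun c => ((labellings k c).countP (fun τ => τ.eval x && τ.eval y) : ℝ))).prod := by
      have heq : (cs.map (fun c => ((labellings k c).countP (fun τ => τ.eval x && τ.eval y) : ℝ))).prod
          = (1/2 : ℝ) ^ cs.length
            * (cs.map (fun c => ((labellings k c).length : ℝ)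
                - ((labellings k c).countP (fun τ => τ.eval x != τ.eval y) : ℝ))).prod := by
        rw [← AndOrAux.prod_map_mul_const]
        congr 1
        refine List.map_congr_left fun c _ => ?_
        have h1 := two_nTT_add_D (k := k) c x y
        have h2 : (2:ℝ) * ((labellings k c).countP (fun τ => τ.eval x && τ.eval y) : ℝ)
            + ((labellings k c).countP (fun τ => τ.eval x != τ.eval y) : ℝ)
            = ((labellings k c).length : ℝ) := by exact_mod_cast congrArg (Nat.cast : ℕ → ℝ) h1
        linarith
      rw [heq]
      have hmono : (cs.map (fun c => (1 - e) * ((labellings k c).length : ℝ))).prod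
          ≤ (cs.map (fun c => ((labellings k c).length : ℝ)
              - ((labellings k c).countP (fun τ => τ.eval x != τ.eval y) : ℝ))).prod := by
        apply AndOrAux.prod_map_le_prod_map
        intro c hc
        constructor
        · exact mul_nonneg (by linarith) (hWpos c hc).le
        · have := child c hc
          nlinarith [hWpos c hc]
      rw [AndOrAux.prod_map_mul_const] at hmono
      have h2 : (0:ℝ) ≤ (1/2 : ℝ) ^ cs.length := by positivity
      calc (1/2 : ℝ) ^ cs.length * ((1 - e) ^ cs.length * P)
          ≤ (1/2 : ℝ) ^ cs.length
            * (cs.map (fun c => ((labellings k c).length : ℝ)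
                - ((labellings k c).countP (fun τ => τ.eval x != τ.eval y) : ℝ))).prod :=
            mul_le_mul_of_nonneg_left hmono h2
      _ = _ := rfl
    -- assemble
    have hcast' : (((cs.map (fun c => (labellings k c).length)).prod : ℕ) : ℝ) = P := by
      rw [Nat.cast_list_prod, List.map_map]
      rfl
    have hWnode : ((labellings k (.node cs)).length : ℝ) = 2 * P := by
      have := length_labellings_node (k := k) cs
      have h2 := congrArg (Nat.cast : ℕ → ℝ) this
      push_cast at h2
      simp only [List.map_map, Function.comp_def] at h2
      exact h2
    have hsat : (PTree.node cs).satLevel = s + 1 := by rw [satLevel_node]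
    rw [hsat]
    have hdsucc : dseq (s + 1) = e - e ^ 2 / 2 := rfl
    rw [hdsucc, hWnode]
    -- final arithmetic
    have hpb := pow_bound cs.length hlen (1 - e) (by linarith) (by linarith)
    have hhalf2 : ((1:ℝ)/2) ^ cs.length * (2:ℝ) ^ cs.length = 1 := by
      rw [← mul_pow]; norm_num
    have hE2 : ((labellings k (.node cs)).countP (fun τ => τ.eval x != τ.eval y) : ℝ)
        = 4 * ((1/2 : ℝ) ^ cs.length) * P
          - 4 * (cs.map (fun c => ((labellings k c).countP (fun τ => τ.eval x && τ.eval y) : ℝ))).prod := by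
      rw [hTT] at E
      rw [hhalf x, hhalf y, hhalfneg x, hhalfneg y] at E
      linarith
    rw [hE2]
    have hfinal : 4 * ((1/2 : ℝ) ^ cs.length) * P
        - 4 * ((1/2 : ℝ) ^ cs.length * ((1 - e) ^ cs.length * P))
        ≤ (e - e ^ 2 / 2) * (2 * P) := by
      have hmul := mul_le_mul_of_nonneg_right hpb hPnonneg
      have hrw : (1 - (1 - e)) = e := by ring
      have h2pos : (0:ℝ) < 2 ^ cs.length := by positivity
      have hkey : 2 * (1 - (1 - e) ^ cs.length) * P
          ≤ 2 ^ cs.length * ((e) - e ^ 2 / 2) * P := by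
        calc 2 * (1 - (1 - e) ^ cs.length) * P
            ≤ 2 ^ cs.length * ((1 - (1 - e)) - (1 - (1 - e)) ^ 2 / 2) * P := hmul
        _ = 2 ^ cs.length * (e - e ^ 2 / 2) * P := by rw [hrw]
      have hdiv := mul_le_mul_of_nonneg_left hkey (le_of_lt (by positivity :
          (0:ℝ) < (1/2 : ℝ) ^ cs.length))
      calc 4 * ((1/2 : ℝ) ^ cs.length) * P
          - 4 * ((1/2 : ℝ) ^ cs.length * ((1 - e) ^ cs.length * P))
          = (1/2 : ℝ) ^ cs.length * (2 * (2 * (1 - (1 - e) ^ cs.length) * P)) := by ring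
      _ ≤ (1/2 : ℝ) ^ cs.length * (2 * (2 ^ cs.length * (e - e ^ 2 / 2) * P)) := by nlinarith [hdiv]
      _ = ((1/2 : ℝ) ^ cs.length * 2 ^ cs.length) * (2 * (e - e ^ 2 / 2) * P) := by ring
      _ = (e - e ^ 2 / 2) * (2 * P) := by rw [hhalf2]; ring
    calc 4 * ((1/2 : ℝ) ^ cs.length) * P
        - 4 * (cs.map (fun c => ((labellings k c).countP (fun τ => τ.eval x && τ.eval y) : ℝ))).prod
        ≤ 4 * ((1/2 : ℝ) ^ cs.length) * P
          - 4 * ((1/2 : ℝ) ^ cs.length * ((1 - e) ^ cs.length * P)) := by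
          have := hTTlow
          linarith
    _ ≤ (e - e ^ 2 / 2) * (2 * P) := hfinal
decreasing_by
  have := List.sizeOf_lt_of_mem ‹c ∈ cs›; simp only [PTree.node.sizeOf_spec]; omega

end AndOrAux

/-- Fix `k ≥ 1`. If the saturation levels of a sequence of
and/or tree shapes tend to infinity, then the probability that the uniform
random `k`-labelling computes a constant function tends to 1; moreover
`P_k[t_n](True) = P_k[t_n](False)` for every `n`, so both tend to `1/2`. -/
theorem andor_saturation_degenerate (k : ℕ) (hk : 1 ≤ k) (t : ℕ → PTree)
    (ht : ∀ n, IsShape (t n))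
    (hsat : Filter.Tendsto (fun n => (t n).satLevel) Filter.atTop Filter.atTop) :
    Filter.Tendsto
        (fun n => Pr k (t n) {g | g = (fun _ => true) ∨ g = (fun _ => false)})
        Filter.atTop (nhds 1)
      ∧ (∀ n, Pfun k (t n) (fun _ => true) = Pfun k (t n) (fun _ => false))
      ∧ Filter.Tendsto (fun n => Pfun k (t n) (fun _ => true)) Filter.atTop (nhds (1/2))
      ∧ Filter.Tendsto (fun n => Pfun k (t n) (fun _ => false)) Filter.atTop (nhds (1/2)) := by
  classical
  open AndOrAux in
  have hTF : (fun _ => true : (Fin k → Bool) → Bool) ≠ (fun _ => false) := by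
    intro h
    exact absurd (congrFun h (fun _ => true)) (by simp)
  -- the main per-shape estimates
  have key : ∀ (u : PTree), IsShape u →
      (1 - (2^k : ℝ) * AndOrAux.dseq u.satLevel
          ≤ Pr k u {g | g = (fun _ => true) ∨ g = (fun _ => false)}
        ∧ Pr k u {g | g = (fun _ => true) ∨ g = (fun _ => false)} ≤ 1)
      ∧ Pfun k u (fun _ => true) = Pfun k u (fun _ => false)
      ∧ Pfun k u (fun _ => true)
          = Pr k u {g | g = (fun _ => true) ∨ g = (fun _ => false)} / 2
      ∧ Pfun k u (fun _ => false)
          = Pr k u {g | g = (fun _ => true) ∨ g = (fun _ => false)} / 2 := by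
    intro u hu
    set l := labellings k u with hl
    have hW : 0 < l.length := AndOrAux.labellings_length_pos hk u
    have hWR : (0:ℝ) < (l.length : ℝ) := by exact_mod_cast hW
    -- numerators as countP
    have hPr : Pr k u {g | g = (fun _ => true) ∨ g = (fun _ => false)}
        = ((l.countP (fun τ => decide (τ.eval = (fun _ => true) ∨ τ.eval = (fun _ => false))) : ℝ))
          / (l.length : ℝ) := by
      rw [Pr, ← hl, List.countP_eq_length_filter]
      refine congrArg (fun z : ℕ => (z:ℝ) / (l.length:ℝ)) ?_
      refine congrArg List.length ?_
      exact List.filter_congr fun τ _ => decide_eq_decide.mpr Iff.rfl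
    have hPT : Pfun k u (fun _ => true)
        = ((l.countP (fun τ => decide (τ.eval = (fun _ => true))) : ℝ)) / (l.length : ℝ) := by
      rw [Pfun, Pr, ← hl, List.countP_eq_length_filter]
      refine congrArg (fun z : ℕ => (z:ℝ) / (l.length:ℝ)) ?_
      refine congrArg List.length ?_
      exact List.filter_congr fun τ _ => decide_eq_decide.mpr Set.mem_singleton_iff
    have hPF : Pfun k u (fun _ => false)
        = ((l.countP (fun τ => decide (τ.eval = (fun _ => false))) : ℝ)) / (l.length : ℝ) := by
      rw [Pfun, Pr, ← hl, List.countP_eq_length_filter]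
      refine congrArg (fun z : ℕ => (z:ℝ) / (l.length:ℝ)) ?_
      refine congrArg List.length ?_
      exact List.filter_congr fun τ _ => decide_eq_decide.mpr Set.mem_singleton_iff
    set nC := l.countP (fun τ => decide (τ.eval = (fun _ => true) ∨ τ.eval = (fun _ => false)))
      with hnC
    set nT := l.countP (fun τ => decide (τ.eval = (fun _ => true))) with hnT
    set nF := l.countP (fun τ => decide (τ.eval = (fun _ => false))) with hnF
    -- symmetry: nT = nF
    have hsym : nT = nF := by
      rw [hnT, hl, AndOrAux.countP_negT u (fun τ => decide (τ.eval = (fun _ => true)))]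
      refine List.countP_congr fun τ _ => ?_
      simp only [decide_eq_true_eq]
      have hev : (AndOrAux.negT τ).eval = fun z => !(τ.eval z) :=
        funext (AndOrAux.eval_negT τ)
      rw [hev]
      constructor
      · intro h
        funext z
        have := congrFun h z
        simpa using this
      · intro h
        funext z
        rw [congrFun h z]
        rfl
    -- splitting: nC = nT + nF
    have hsplit : nC = nT + nF := by
      rw [hnC, hnT, hnF]
      rw [show (fun τ : LTree k => decide (τ.eval = (fun _ => true) ∨ τ.eval = (fun _ => false)))
          = (fun τ => decide (τ.eval = (fun _ => true)) || decide (τ.eval = (fun _ => false))) from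
        funext fun τ => by
          by_cases h1 : τ.eval = (fun _ => true) <;> by_cases h2 : τ.eval = (fun _ => false) <;>
            simp [h1, h2]]
      refine AndOrAux.countP_disj _ _ _ fun τ _ => ?_
      rintro ⟨h1, h2⟩
      simp only [decide_eq_true_eq] at h1 h2
      exact hTF (h1 ▸ h2 ▸ rfl)
    -- complement + union bound
    have hcompl : l.length = nC + l.countP (fun τ =>
        !(decide (τ.eval = (fun _ => true) ∨ τ.eval = (fun _ => false)))) := by
      rw [hnC]
      exact AndOrAux.length_eq_countP_add_countP_not l _
    have hunion : l.countP (fun τ =>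
          !(decide (τ.eval = (fun _ => true) ∨ τ.eval = (fun _ => false))))
        ≤ ∑ y : Fin k → Bool,
            l.countP (fun τ => τ.eval y != τ.eval (fun _ => true)) := by
      refine AndOrAux.countP_le_sum Finset.univ l _ _ fun τ _ hpc => ?_
      by_contra hno
      push_neg at hno
      have hall : ∀ y : Fin k → Bool, τ.eval y = τ.eval (fun _ => true) := by
        intro y
        have := hno y (Finset.mem_univ y)
        simpa using this
      have hconst : τ.eval = (fun _ => true) ∨ τ.eval = (fun _ => false) := by
        cases hb : τ.eval (fun _ => true) with
        | true => exact Or.inl (funext fun y => (hall y).trans hb)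
        | false => exact Or.inr (funext fun y => (hall y).trans hb)
      simp [hconst] at hpc
    have hterm : ∀ y : Fin k → Bool,
        (l.countP (fun τ => τ.eval y != τ.eval (fun _ => true)) : ℝ)
          ≤ AndOrAux.dseq u.satLevel * (l.length : ℝ) :=
      fun y => AndOrAux.D_le_main hk y (fun _ => true) u hu
    have hcard : (Finset.univ : Finset (Fin k → Bool)).card = 2^k := by
      simp [Fintype.card_fun]
    have hsumR : ((∑ y : Fin k → Bool,
          l.countP (fun τ => τ.eval y != τ.eval (fun _ => true)) : ℕ) : ℝ)
        ≤ (2^k : ℝ) * (AndOrAux.dseq u.satLevel * (l.length : ℝ)) := by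
      push_cast
      calc (∑ y : Fin k → Bool,
            (l.countP (fun τ => τ.eval y != τ.eval (fun _ => true)) : ℝ))
          ≤ ∑ _y : Fin k → Bool, AndOrAux.dseq u.satLevel * (l.length : ℝ) :=
            Finset.sum_le_sum fun y _ => hterm y
      _ = (2^k : ℝ) * (AndOrAux.dseq u.satLevel * (l.length : ℝ)) := by
          rw [Finset.sum_const, hcard]
          simp [nsmul_eq_mul]
    have hlow : 1 - (2^k : ℝ) * AndOrAux.dseq u.satLevel
        ≤ Pr k u {g | g = (fun _ => true) ∨ g = (fun _ => false)} := by
      rw [hPr]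
      rw [le_div_iff₀ hWR]
      have h1 : ((l.length : ℕ) : ℝ) - (nC : ℝ)
          ≤ (2^k : ℝ) * (AndOrAux.dseq u.satLevel * (l.length : ℝ)) := by
        have h2 : ((l.countP (fun τ =>
            !(decide (τ.eval = (fun _ => true) ∨ τ.eval = (fun _ => false)))) : ℕ) : ℝ)
            ≤ (2^k : ℝ) * (AndOrAux.dseq u.satLevel * (l.length : ℝ)) := by
          refine le_trans ?_ hsumR
          exact_mod_cast hunion
        have h3 : ((l.length : ℕ) : ℝ) = (nC : ℝ) + ((l.countP (fun τ =>
            !(decide (τ.eval = (fun _ => true) ∨ τ.eval = (fun _ => false)))) : ℕ) : ℝ) := by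
          exact_mod_cast congrArg (Nat.cast : ℕ → ℝ) hcompl
        linarith
      linarith
    have hup : Pr k u {g | g = (fun _ => true) ∨ g = (fun _ => false)} ≤ 1 := by
      rw [hPr, div_le_one hWR]
      exact_mod_cast List.countP_le_length
    refine ⟨⟨hlow, hup⟩, ?_, ?_, ?_⟩
    · rw [hPT, hPF, hsym]
    · have h2 : nC = 2 * nT := by omega
      have h3 : (nC : ℝ) = 2 * (nT : ℝ) := by exact_mod_cast h2
      rw [hPT, hPr, h3]
      ring
    · have h2 : nC = 2 * nF := by omega
      have h3 : (nC : ℝ) = 2 * (nF : ℝ) := by exact_mod_cast h2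
      rw [hPF, hPr, h3]
      ring
  -- assemble the four statements
  have hdlim : Filter.Tendsto (fun n => AndOrAux.dseq (t n).satLevel) Filter.atTop (nhds 0) :=
    AndOrAux.dseq_tendsto.comp hsat
  have hlowlim : Filter.Tendsto (fun n => 1 - (2^k : ℝ) * AndOrAux.dseq (t n).satLevel)
      Filter.atTop (nhds 1) := by
    have := (hdlim.const_mul ((2:ℝ)^k)).const_sub 1
    simpa using this
  have h1 : Filter.Tendsto
      (fun n => Pr k (t n) {g | g = (fun _ => true) ∨ g = (fun _ => false)})
      Filter.atTop (nhds 1) := by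
    refine tendsto_of_tendsto_of_tendsto_of_le_of_le hlowlim tendsto_const_nhds
      (fun n => (key (t n) (ht n)).1.1) (fun n => (key (t n) (ht n)).1.2)
  refine ⟨h1, fun n => (key (t n) (ht n)).2.1, ?_, ?_⟩
  · have h2 := h1.div_const 2
    rw [show (1:ℝ)/2 = 1/2 from rfl] at h2
    refine h2.congr fun n => ?_
    rw [(key (t n) (ht n)).2.2.1]
  · have h2 := h1.div_const 2
    refine h2.congr fun n => ?_
    rw [(key (t n) (ht n)).2.2.2]
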